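/- Let G be a reaction graph embedded in ℝ^d such that every edge of G^lir (the subgraph of edges joining distinct strongly connected components) has the property that its reaction vector is parallel to the reaction vector of some other edge of G emanating from its target: for every edge (y, y') ∈ E^lir there exists an edge (y', y'') ∈ E with y'−y parallel to y''−y'. Then G is endotactic. -/
import Mathlib


open Matrix Finset
open scoped Matrix Classical

abbrev Vec (d : ℕ) := Fin d → ℝ
abbrev Edge (d : ℕ) := Vec d × Vec d

/-- Sources of edges whose reaction vector is not orthogonal to `u`. -/
def srcU {d : ℕ} (E : Finset (Edge d)) (u : Vec d) : Set (Vec d) :=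
  {y | ∃ y', (y, y') ∈ E ∧ (y' - y) ⬝ᵥ u ≠ 0}

/-- `G` is `u`-endotactic: no `u`-endotacticity violating reaction. -/
def uEndotactic {d : ℕ} (E : Finset (Edge d)) (u : Vec d) : Prop :=
  ¬ ∃ y y', (y, y') ∈ E ∧ 0 < (y' - y) ⬝ᵥ u ∧ ∀ z ∈ srcU E u, z ⬝ᵥ u ≤ y ⬝ᵥ u

def Endotactic {d : ℕ} (E : Finset (Edge d)) : Prop := ∀ u : Vec d, uEndotactic E u

/-- Reachability by a directed path. -/
def Reach {d : ℕ} (E : Finset (Edge d)) : Vec d → Vec d → Prop :=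
  Relation.ReflTransGen (fun a b => (a, b) ∈ E)

def IsEig {d : ℕ} (A : Matrix (Fin d) (Fin d) ℝ) (μ : ℂ) : Prop :=
  ∃ v : Fin d → ℂ, v ≠ 0 ∧ (A.map Complex.ofReal).mulVec v = μ • v

/-- Two vertices lie in the same strongly connected component. -/
def SCCeq {d : ℕ} (E : Finset (Edge d)) (a b : Vec d) : Prop :=
  Reach E a b ∧ Reach E b a

/-- If every edge joining distinct strongly connected components has its
reaction vector parallel to the reaction vector of some edge emanating from its
target, then the reaction graph is endotactic. -/

lemma reach_gt {d : ℕ} (E : Finset (Edge d)) (u : Vec d) (t : ℝ)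
    (hmax : ∀ z ∈ srcU E u, z ⬝ᵥ u ≤ t) :
    ∀ {a b : Vec d}, Reach E a b → t < a ⬝ᵥ u → t < b ⬝ᵥ u := by
  intro a b hr
  induction hr using Relation.ReflTransGen.head_induction_on with
  | refl => exact id
  | head hac hcb ih =>
    rename_i a c
    intro ha
    by_cases hz : (c - a) ⬝ᵥ u = 0
    · apply ih
      have : c ⬝ᵥ u - a ⬝ᵥ u = 0 := by rwa [sub_dotProduct] at hz
      linarith
    · exact absurd (hmax a ⟨c, hac, hz⟩) (not_le.mpr ha)

theorem stmt8 {d : ℕ} (E : Finset (Edge d)) (hsimple : ∀ e ∈ E, e.1 ≠ e.2)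
    (h : ∀ e ∈ E, ¬ SCCeq E e.1 e.2 →
      ∃ y'' : Vec d, (e.2, y'') ∈ E ∧ ∃ c : ℝ, c ≠ 0 ∧ y'' - e.2 = c • (e.2 - e.1)) :
    Endotactic E := by
  intro u
  rintro ⟨y, y', hE, hpos, hmax⟩
  have hyu : y ⬝ᵥ u < y' ⬝ᵥ u := by
    have := hpos; rw [sub_dotProduct] at this; linarith
  by_cases hscc : SCCeq E y y'
  · exact absurd (reach_gt E u (y ⬝ᵥ u) hmax hscc.2 hyu) (lt_irrefl _)
  · obtain ⟨y'', hE', c, hc, hpar⟩ := h (y, y') hE hscc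
    have hy' : y' ∈ srcU E u := by
      refine ⟨y'', hE', ?_⟩
      rw [hpar, smul_dotProduct]
      exact mul_ne_zero hc (ne_of_gt hpos)
    exact absurd (hmax y' hy') (not_le.mpr hyu)
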